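/- The loss ℓ_t decomposes as the sum of two nonnegative terms: ℓ_t = [Σ_{i≤j} σ(i,j) b̂_t(i,j)(δ_t(i)y_t(j)+δ_t(j)y_t(i))] + [Σ_{i≤j} σ(i,j) b(i,j)(−δ_t(i)y_t(j)−δ_t(j)y_t(i))], where the first term is nonnegative by optimality of ŝ_t under b̂_t and the second by optimality of s_t under b. -/
import Mathlib


open Finset

/-- The PCS objective: `∑_{i ≤ j} σ(i,j) c(i,j) (s(i) y(j) + s(j) y(i))`,
where `σ(i,j) = 1` if `i = j` and `-1` otherwise. -/
noncomputable def pcsObj {n : ℕ} (c : Fin n → Fin n → ℝ) (y : Fin n → ℝ)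
    (s : Fin n → ℝ) : ℝ :=
  ∑ i : Fin n, ∑ j : Fin n, if i ≤ j then
    (if i = j then (1 : ℝ) else -1) * c i j * (s i * y j + s j * y i) else 0


lemma pcs_sub {n : ℕ} (c : Fin n → Fin n → ℝ) (y : Fin n → ℝ) (u v : Fin n → ℝ) :
    (∑ i : Fin n, ∑ j : Fin n, if i ≤ j then
        (if i = j then (1 : ℝ) else -1) * c i j *
          ((u i - v i) * y j + (u j - v j) * y i) else 0) =
      pcsObj c y u - pcsObj c y v := by
  unfold pcsObj
  rw [← Finset.sum_sub_distrib]
  refine Finset.sum_congr rfl fun i _ => ?_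
  rw [← Finset.sum_sub_distrib]
  refine Finset.sum_congr rfl fun j _ => ?_
  split_ifs <;> ring

/-- the loss ℓ_t decomposes as the sum of two nonnegative terms,
the first nonnegative by optimality of `ŝ_t` under `b̂_t`, the second by
optimality of `s_t` under `b`. -/
theorem stmt14 {n : ℕ} (hn : 1 ≤ n) (S : Finset (Fin n → ℕ)) (hS : S.Nonempty)
    (y : Fin n → ℝ) (hy : ∀ i, 0 ≤ y i)
    (b bhat : Fin n → Fin n → ℝ)
    (st sht : Fin n → ℕ) (hst : st ∈ S) (hsht : sht ∈ S)
    (hstOpt : ∀ s ∈ S,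
      pcsObj b y (fun i => (s i : ℝ)) ≤ pcsObj b y (fun i => (st i : ℝ)))
    (hshtOpt : ∀ s ∈ S,
      pcsObj bhat y (fun i => (s i : ℝ)) ≤ pcsObj bhat y (fun i => (sht i : ℝ)))
    (δ : Fin n → ℝ) (hδ : ∀ i, δ i = (sht i : ℝ) - (st i : ℝ)) :
    ((∑ i : Fin n, ∑ j : Fin n, if i ≤ j then
        (if i = j then (1 : ℝ) else -1) * (bhat i j - b i j) *
          (δ i * y j + δ j * y i) else 0) =
      (∑ i : Fin n, ∑ j : Fin n, if i ≤ j then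
        (if i = j then (1 : ℝ) else -1) * bhat i j *
          (δ i * y j + δ j * y i) else 0) +
      (∑ i : Fin n, ∑ j : Fin n, if i ≤ j then
        (if i = j then (1 : ℝ) else -1) * b i j *
          (-(δ i) * y j + -(δ j) * y i) else 0)) ∧
    (0 ≤ ∑ i : Fin n, ∑ j : Fin n, if i ≤ j then
        (if i = j then (1 : ℝ) else -1) * bhat i j *
          (δ i * y j + δ j * y i) else 0) ∧
    (0 ≤ ∑ i : Fin n, ∑ j : Fin n, if i ≤ j then
        (if i = j then (1 : ℝ) else -1) * b i j *
          (-(δ i) * y j + -(δ j) * y i) else 0) := by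
  
  have h1 : (∑ i : Fin n, ∑ j : Fin n, if i ≤ j then
        (if i = j then (1 : ℝ) else -1) * bhat i j *
          (δ i * y j + δ j * y i) else 0) =
      pcsObj bhat y (fun i => (sht i : ℝ)) - pcsObj bhat y (fun i => (st i : ℝ)) := by
    rw [← pcs_sub bhat y]
    refine Finset.sum_congr rfl fun i _ => Finset.sum_congr rfl fun j _ => ?_
    simp only [hδ]
  have h2 : (∑ i : Fin n, ∑ j : Fin n, if i ≤ j then
        (if i = j then (1 : ℝ) else -1) * b i j *
          (-(δ i) * y j + -(δ j) * y i) else 0) =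
      pcsObj b y (fun i => (st i : ℝ)) - pcsObj b y (fun i => (sht i : ℝ)) := by
    rw [← pcs_sub b y]
    refine Finset.sum_congr rfl fun i _ => Finset.sum_congr rfl fun j _ => ?_
    simp only [hδ]; split_ifs <;> ring
  have h3 : (∑ i : Fin n, ∑ j : Fin n, if i ≤ j then
        (if i = j then (1 : ℝ) else -1) * (bhat i j - b i j) *
          (δ i * y j + δ j * y i) else 0) =
      (∑ i : Fin n, ∑ j : Fin n, if i ≤ j then
        (if i = j then (1 : ℝ) else -1) * bhat i j *
          (δ i * y j + δ j * y i) else 0) +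
      (∑ i : Fin n, ∑ j : Fin n, if i ≤ j then
        (if i = j then (1 : ℝ) else -1) * b i j *
          (-(δ i) * y j + -(δ j) * y i) else 0) := by
    rw [← Finset.sum_add_distrib]
    refine Finset.sum_congr rfl fun i _ => ?_
    rw [← Finset.sum_add_distrib]
    refine Finset.sum_congr rfl fun j _ => ?_
    split_ifs <;> ring
  refine ⟨h3, ?_, ?_⟩
  · rw [h1]; linarith [hshtOpt st hst]
  · rw [h2]; linarith [hstOpt sht hsht]
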